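/- Let C be a k-dimensional linear subspace of F^n (F a field equipped with an involutive-free standard bilinear form ⟨u,v⟩ = Σ u_i v_i) with generator matrix G ∈ F^{k×n} whose rows form a basis of C. Then dim(C ∩ C^⊥) = k − rank(G·G^T), where C^⊥ = {v ∈ F^n : ⟨v,w⟩ = 0 for all w ∈ C}. -/

import Mathlib

open Matrix

/-- The dual code of a subspace of `Fin n → F` with respect to the standard
bilinear form `⟨v, w⟩ = ∑ i, v i * w i`. -/
def dualCode {F : Type*} [CommRing F] {n : ℕ} (C : Submodule F (Fin n → F)) :
    Submodule F (Fin n → F) where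
  carrier := {v | ∀ w ∈ C, v ⬝ᵥ w = 0}
  add_mem' := by
    intro a b ha hb w hw
    simp [add_dotProduct, ha w hw, hb w hw]
  zero_mem' := by
    intro w hw
    simp
  smul_mem' := by
    intro c a ha w hw
    simp [smul_dotProduct, ha w hw]

lemma key_identity {F : Type*} [Field F] {k n : ℕ} (G : Matrix (Fin k) (Fin n) F)
    (x : Fin k → F) (i : Fin k) : ((G * Gᵀ) *ᵥ x) i = (x ᵥ* G) ⬝ᵥ G i := by
  simp only [mulVec, vecMul, dotProduct, mul_apply, transpose_apply, Finset.sum_mul,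
    Finset.mul_sum]
  rw [Finset.sum_comm]
  apply Finset.sum_congr rfl
  intro j _
  apply Finset.sum_congr rfl
  intro l _
  ring

/-- Lemma 2.5: if the rows of `G` form a basis of the code `C`, then the hull
`C ∩ C^⊥` has dimension `k - rank (G * Gᵀ)`. -/
theorem hull_finrank_eq {F : Type*} [Field F] {k n : ℕ}
    (G : Matrix (Fin k) (Fin n) F) (C : Submodule F (Fin n → F))
    (hspan : C = Submodule.span F (Set.range G)) (hli : LinearIndependent F G) :
    Module.finrank F ↥(C ⊓ dualCode C) = k - (G * Gᵀ).rank := by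
  classical
  set L := (G * Gᵀ).mulVecLin with hL
  have hinj : Function.Injective G.vecMulLinear := by
    rw [Matrix.coe_vecMulLinear, Matrix.vecMul_injective_iff]
    exact hli
  have hrange : LinearMap.range G.vecMulLinear = C := by
    rw [range_vecMulLinear, hspan]
    rfl
  -- the hull is the image of ker L under vecMulLinear
  have hmap : Submodule.map G.vecMulLinear (LinearMap.ker L) = C ⊓ dualCode C := by
    apply le_antisymm
    · rintro v ⟨x, hx, rfl⟩
      refine ⟨hrange ▸ LinearMap.mem_range_self _ x, ?_⟩
      intro w hw
      rw [hspan] at hw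
      induction hw using Submodule.span_induction with
      | mem w hw =>
        obtain ⟨i, rfl⟩ := hw
        have := congr_fun (LinearMap.mem_ker.mp hx) i
        rw [hL, Matrix.mulVecLin_apply, key_identity] at this
        simpa using this
      | zero => simp
      | add a b _ _ ha hb =>
        simp only [Matrix.vecMulLinear_apply] at ha hb ⊢
        simp [dotProduct_add, ha, hb]
      | smul c a _ ha =>
        simp only [Matrix.vecMulLinear_apply] at ha ⊢
        simp [dotProduct_smul, ha]
    · rintro v ⟨hvC, hvD⟩
      rw [← hrange] at hvC
      obtain ⟨x, rfl⟩ := hvC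
      refine ⟨x, ?_, rfl⟩
      simp only [SetLike.mem_coe, LinearMap.mem_ker]
      funext i
      rw [hL, Matrix.mulVecLin_apply, key_identity]
      exact hvD (G i) (hspan ▸ Submodule.subset_span ⟨i, rfl⟩)
  have h1 : Module.finrank F ↥(C ⊓ dualCode C) = Module.finrank F (LinearMap.ker L) := by
    rw [← hmap]
    exact (Submodule.equivMapOfInjective _ hinj _).finrank_eq.symm
  have h2 := LinearMap.finrank_range_add_finrank_ker L
  have h3 : Module.finrank F (Fin k → F) = k := by simp
  have h4 : (G * Gᵀ).rank = Module.finrank F (LinearMap.range L) := rfl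
  omega
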